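/- Let (X,‖·‖,τ) be a complete Saks space with mixed topology γ, Γ_γ a norming directed system of continuous seminorms generating γ, and (A,D(A)) a γ-densely defined, Γ_γ-dissipative linear operator on X. Assume Ran(λ−A) is γ-dense in X for some λ>0. Then the γ-strongly continuous, γ-equicontinuous semigroup (T(t))_{t≥0} generated by the γ-closure of A is a contraction semigroup, i.e. ‖T(t)‖ ≤ 1 for all t≥0. -/

import Mathlib

open Filter Topology Set

namespace LumerPhillips

variable {X : Type*}

section Defs

variable [NormedAddCommGroup X] [NormedSpace ℝ X]

/-- A directed set of seminorms. -/
def DirectedSeminorms (Γ : Set (Seminorm ℝ X)) : Prop :=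
  ∀ p ∈ Γ, ∀ q ∈ Γ, ∃ r ∈ Γ, p ≤ r ∧ q ≤ r

/-- `Γ` is a system of `t`-continuous seminorms generating the topology `t`, i.e. `t` is
the locally convex topology induced by the seminorms in `Γ`. -/
def GeneratesTop (Γ : Set (Seminorm ℝ X)) (t : TopologicalSpace X) : Prop :=
  (∀ p ∈ Γ, @Continuous X ℝ t _ p) ∧
    t = ⨅ p : Γ,
      (p : Seminorm ℝ X).toSeminormedAddCommGroup.toUniformSpace.toTopologicalSpace

/-- `Γ` is norming: the norm is the pointwise supremum of the seminorms in `Γ`. -/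
def NormingSeminorms (Γ : Set (Seminorm ℝ X)) : Prop :=
  ∀ x : X, ‖x‖ = ⨆ p : Γ, (p : Seminorm ℝ X) x

/-- `(X,‖·‖,τ)` is a Saks space witnessed by the norming directed system `Γ` of τ-continuous
seminorms generating `τ`; `τ` is a Hausdorff locally convex topology coarser than the norm
topology. -/
def IsSaksSystem (τ : TopologicalSpace X) (Γ : Set (Seminorm ℝ X)) : Prop :=
  @T2Space X τ ∧ @LocallyConvexSpace ℝ X _ _ _ _ τ ∧
    (inferInstance : TopologicalSpace X) ≤ τ ∧
    DirectedSeminorms Γ ∧ GeneratesTop Γ τ ∧ NormingSeminorms Γ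

/-- `t` is a linear (vector space) topology on `X`. -/
def IsLinearTop (t : TopologicalSpace X) : Prop :=
  @IsTopologicalAddGroup X t _ ∧ @ContinuousSMul ℝ X _ _ t

/-- The topologies `t` and `s` agree (as subspace topologies) on every norm-bounded set. -/
def AgreeOnBoundedSets (t s : TopologicalSpace X) : Prop :=
  ∀ S : Set X, Bornology.IsBounded S →
    TopologicalSpace.induced ((↑) : S → X) t = TopologicalSpace.induced ((↑) : S → X) s

/-- `γ` is the mixed topology `γ(‖·‖,τ)`: the finest linear topology that agrees with `τ` on
norm-bounded sets and lies between `τ` and the norm topology. (Recall that in Mathlib's order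
on topologies, `t ≤ s` means `t` is finer than `s`.) -/
def IsMixedTopology (τ γ : TopologicalSpace X) : Prop :=
  (IsLinearTop γ ∧ γ ≤ τ ∧ (inferInstance : TopologicalSpace X) ≤ γ ∧ AgreeOnBoundedSets γ τ) ∧
    ∀ t : TopologicalSpace X, IsLinearTop t → t ≤ τ →
      (inferInstance : TopologicalSpace X) ≤ t → AgreeOnBoundedSets t τ → γ ≤ t

/-- `u` is a Cauchy sequence for the (group) topology `t`. -/
def CauchySeqTop (t : TopologicalSpace X) (u : ℕ → X) : Prop :=
  ∀ V ∈ @nhds X t 0, ∃ N : ℕ, ∀ m ≥ N, ∀ n ≥ N, u m - u n ∈ V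

/-- `(X,t)` is sequentially complete. -/
def SeqCompleteTop (t : TopologicalSpace X) : Prop :=
  ∀ u : ℕ → X, CauchySeqTop t u → ∃ x : X, Filter.Tendsto u atTop (@nhds X t x)

/-- `(X,t)` is complete (every Cauchy filter for the group uniformity of `t` converges). -/
def CompleteTop (t : TopologicalSpace X) : Prop :=
  ∀ F : Filter X, F.NeBot →
    (∀ V ∈ @nhds X t 0, ∃ S ∈ F, ∀ x ∈ S, ∀ y ∈ S, x - y ∈ V) →
    ∃ x : X, F ≤ @nhds X t x

/-- The map `λ - A` on the domain `D` of the linear operator `A`. -/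
def lmap (D : Submodule ℝ X) (A : D →ₗ[ℝ] X) (l : ℝ) : D → X :=
  fun x => l • (x : X) - A x

/-- The operator `(A, D)` is `Γ`-dissipative: `p((λ - A)x) ≥ λ p(x)` for all `λ > 0`,
`x ∈ D` and `p ∈ Γ`. -/
def GammaDissipative (Γ : Set (Seminorm ℝ X)) (D : Submodule ℝ X) (A : D →ₗ[ℝ] X) : Prop :=
  ∀ l : ℝ, 0 < l → ∀ x : D, ∀ p ∈ Γ, l * p (x : X) ≤ p (lmap D A l x)

/-- The range of `λ - A`. -/
def opRange (D : Submodule ℝ X) (A : D →ₗ[ℝ] X) (l : ℝ) : Set X :=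
  Set.range (lmap D A l)

/-- The graph of the operator `(A, D)`. -/
def graphSet (D : Submodule ℝ X) (A : D →ₗ[ℝ] X) : Set (X × X) :=
  {p : X × X | ∃ x : D, p = ((x : X), A x)}

/-- The operator `(A, D)` is `t`-closed (equivalently: its graph is closed for the product
topology, which is the net formulation of closedness). -/
def ClosedOp (t : TopologicalSpace X) (D : Submodule ℝ X) (A : D →ₗ[ℝ] X) : Prop :=
  @IsClosed (X × X) (@instTopologicalSpaceProd X X t t) (graphSet D A)

/-- The operator `(A, D)` is sequentially `t`-closed. -/
def SeqClosedOp (t : TopologicalSpace X) (D : Submodule ℝ X) (A : D →ₗ[ℝ] X) : Prop :=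
  ∀ (u : ℕ → D) (x y : X),
    Filter.Tendsto (fun n => (u n : X)) atTop (@nhds X t x) →
    Filter.Tendsto (fun n => A (u n)) atTop (@nhds X t y) →
    ∃ hx : x ∈ D, A ⟨x, hx⟩ = y

/-- `(A', D')` is an extension of `(A, D)`. -/
def ExtensionOp (D : Submodule ℝ X) (A : D →ₗ[ℝ] X)
    (D' : Submodule ℝ X) (A' : D' →ₗ[ℝ] X) : Prop :=
  ∃ h : D ≤ D', ∀ x : D, A' ⟨(x : X), h x.2⟩ = A x

/-- `(A', D')` is the `t`-closure of `(A, D)`: the smallest `t`-closed extension. -/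
def IsClosureOp (t : TopologicalSpace X) (D : Submodule ℝ X) (A : D →ₗ[ℝ] X)
    (D' : Submodule ℝ X) (A' : D' →ₗ[ℝ] X) : Prop :=
  ExtensionOp D A D' A' ∧ ClosedOp t D' A' ∧
    ∀ (D'' : Submodule ℝ X) (A'' : D'' →ₗ[ℝ] X),
      ExtensionOp D A D'' A'' → ClosedOp t D'' A'' → ExtensionOp D' A' D'' A''

/-- `T` is a semigroup of linear operators which is strongly continuous for the topology `t`. -/
def IsSemigroupOn (t : TopologicalSpace X) (T : ℝ → X →ₗ[ℝ] X) : Prop :=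
  T 0 = LinearMap.id ∧ (∀ s u : ℝ, 0 ≤ s → 0 ≤ u → T (s + u) = (T s).comp (T u)) ∧
    ∀ x : X, @ContinuousOn ℝ X _ t (fun s => T s x) (Set.Ici 0)

/-- `T` is equicontinuous with respect to the system of seminorms `Γ`. -/
def EquicontOn (Γ : Set (Seminorm ℝ X)) (T : ℝ → X →ₗ[ℝ] X) : Prop :=
  ∀ p ∈ Γ, ∃ q ∈ Γ, ∃ C : ℝ, 0 ≤ C ∧ ∀ s : ℝ, 0 ≤ s → ∀ x : X, p (T s x) ≤ C * q x

/-- `T` is a contraction semigroup: `‖T(t)‖ ≤ 1` for all `t ≥ 0`. -/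
def ContractionSG (T : ℝ → X →ₗ[ℝ] X) : Prop :=
  ∀ s : ℝ, 0 ≤ s → ∀ x : X, ‖T s x‖ ≤ ‖x‖

/-- `T` is `(‖·‖,τ)`-equitight with respect to the system of seminorms `Γτ` generating `τ`. -/
def EquitightSG (Γτ : Set (Seminorm ℝ X)) (T : ℝ → X →ₗ[ℝ] X) : Prop :=
  ∀ ε : ℝ, 0 < ε → ∀ p ∈ Γτ, ∃ q ∈ Γτ, ∃ C : ℝ, 0 ≤ C ∧
    ∀ s : ℝ, 0 ≤ s → ∀ x : X, p (T s x) ≤ C * q x + ε * ‖x‖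

/-- `T` is a `τ`-bi-continuous semigroup. -/
def IsBiContSG (τ : TopologicalSpace X) (T : ℝ → X →ₗ[ℝ] X) : Prop :=
  IsSemigroupOn τ T ∧
    (∃ M : ℝ, 1 ≤ M ∧ ∃ ω : ℝ, ∀ s : ℝ, 0 ≤ s → ∀ x : X,
      ‖T s x‖ ≤ M * Real.exp (ω * s) * ‖x‖) ∧
    ∀ (x : ℕ → X) (x₀ : X), (∃ C : ℝ, ∀ n, ‖x n‖ ≤ C) →
      Filter.Tendsto x atTop (@nhds X τ x₀) →
      ∀ t₀ : ℝ, 0 < t₀ → ∀ V ∈ @nhds X τ 0,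
        ∃ N : ℕ, ∀ n ≥ N, ∀ s ∈ Set.Icc (0 : ℝ) t₀, T s (x n - x₀) ∈ V

/-- `(A, D)` is the generator of the `τ`-bi-continuous semigroup `T`. -/
def IsGeneratorBi (τ : TopologicalSpace X) (T : ℝ → X →ₗ[ℝ] X)
    (D : Submodule ℝ X) (A : D →ₗ[ℝ] X) : Prop :=
  (∀ x : X, x ∈ D ↔
      ((∃ y : X, Filter.Tendsto (fun s : ℝ => s⁻¹ • (T s x - x)) (𝓝[>] (0 : ℝ))
          (@nhds X τ y)) ∧
        ∃ C : ℝ, ∀ s ∈ Set.Ioc (0 : ℝ) 1, ‖T s x - x‖ ≤ C * s)) ∧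
    ∀ x : D, Filter.Tendsto (fun s : ℝ => s⁻¹ • (T s (x : X) - (x : X))) (𝓝[>] (0 : ℝ))
      (@nhds X τ (A x))

/-- `(A, D)` is the generator of the `t`-strongly continuous semigroup `T` (locally convex
setting). -/
def IsGeneratorLC (t : TopologicalSpace X) (T : ℝ → X →ₗ[ℝ] X)
    (D : Submodule ℝ X) (A : D →ₗ[ℝ] X) : Prop :=
  (∀ x : X, x ∈ D ↔
      ∃ y : X, Filter.Tendsto (fun s : ℝ => s⁻¹ • (T s x - x)) (𝓝[>] (0 : ℝ)) (@nhds X t y)) ∧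
    ∀ x : D, Filter.Tendsto (fun s : ℝ => s⁻¹ • (T s (x : X) - (x : X))) (𝓝[>] (0 : ℝ))
      (@nhds X t (A x))

/-- `D` is bi-dense in `X`: every point is the `τ`-limit of a norm-bounded sequence in `D`. -/
def BiDenselyDefined (τ : TopologicalSpace X) (D : Submodule ℝ X) : Prop :=
  ∀ x : X, ∃ u : ℕ → D, (∃ C : ℝ, ∀ n, ‖(u n : X)‖ ≤ C) ∧
    Filter.Tendsto (fun n => (u n : X)) atTop (@nhds X τ x)

/-- The seminorms `|||x||| = sup_n p_n(x) a_n` with `(p_n) ⊆ Γτ` and `(a_n)` a non-negative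
real null sequence; they generate the submixed topology `γ_s`. -/
def SubmixedSet (Γτ : Set (Seminorm ℝ X)) : Set (Seminorm ℝ X) :=
  {q : Seminorm ℝ X | ∃ (pn : ℕ → Seminorm ℝ X) (an : ℕ → ℝ),
      (∀ n, pn n ∈ Γτ) ∧ (∀ n, 0 ≤ an n) ∧ Filter.Tendsto an atTop (nhds 0) ∧
      ∀ x : X, q x = ⨆ n : ℕ, pn n x * an n}

/-- The subfamily of submixed seminorms with coefficients `0 ≤ a_n ≤ 1`. -/
def SubmixedSetOne (Γτ : Set (Seminorm ℝ X)) : Set (Seminorm ℝ X) :=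
  {q : Seminorm ℝ X | ∃ (pn : ℕ → Seminorm ℝ X) (an : ℕ → ℝ),
      (∀ n, pn n ∈ Γτ) ∧ (∀ n, 0 ≤ an n ∧ an n ≤ 1) ∧ Filter.Tendsto an atTop (nhds 0) ∧
      ∀ x : X, q x = ⨆ n : ℕ, pn n x * an n}

/-- The dual norm of a linear functional (as the supremum over the closed unit ball). -/
noncomputable def dualNormF (f : X →ₗ[ℝ] ℝ) : ℝ :=
  ⨆ x : {x : X // ‖x‖ ≤ 1}, |f x|

/-- The weak topology `σ(X, (X,t)')`. -/
def weakTopOf (t : TopologicalSpace X) : TopologicalSpace X :=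
  ⨅ f : {f : X →ₗ[ℝ] ℝ // @Continuous X ℝ t _ f},
    TopologicalSpace.induced (⇑f.1) inferInstance

/-- `(X,t)` is semi-reflexive: every `t`-(von Neumann-)bounded set is relatively compact
for the weak topology `σ(X,(X,t)')`. -/
def SemiReflexiveTop (t : TopologicalSpace X) : Prop :=
  ∀ S : Set X, @Bornology.IsVonNBounded ℝ X _ _ _ t S →
    @IsCompact X (weakTopOf t) (@closure X (weakTopOf t) S)

/-- A set is sequentially open for the topology `t`. -/
def SeqOpenSet (t : TopologicalSpace X) (s : Set X) : Prop :=
  ∀ (u : ℕ → X) (x : X), x ∈ s → Filter.Tendsto u atTop (@nhds X t x) →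
    ∀ᶠ n in atTop, u n ∈ s

/-- `(X,t)` is C-sequential: every convex sequentially open set is open. -/
def CSequentialTop (t : TopologicalSpace X) : Prop :=
  ∀ s : Set X, Convex ℝ s → SeqOpenSet t s → @IsOpen X t s

end Defs



section Auxiliary

/-- In a normed space with a norming family of seminorms, each seminorm is dominated by
the norm. -/
lemma normingBound [NormedAddCommGroup X] [NormedSpace ℝ X] {Γ : Set (Seminorm ℝ X)}
    (hnorm : NormingSeminorms Γ) {p : Seminorm ℝ X} (hp : p ∈ Γ) (x : X) : p x ≤ ‖x‖ := by
  by_cases hb : BddAbove (Set.range fun q : Γ => (q : Seminorm ℝ X) x)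
  · rw [hnorm x]
    exact le_ciSup hb ⟨p, hp⟩
  · have h0 : ‖x‖ = 0 := by rw [hnorm x]; exact Real.iSup_of_not_bddAbove hb
    have hx : x = 0 := norm_eq_zero.1 h0
    simp [hx]

section Abstract
variable {E : Type*} [AddCommGroup E] [Module ℝ E]

variable {E : Type*} [AddCommGroup E] [Module ℝ E]

theorem abstract_contraction [t : TopologicalSpace E] [tag : IsTopologicalAddGroup E]
    [csm : ContinuousSMul ℝ E] [t2 : T2Space E]
    (Γ : Set (Seminorm ℝ E))
    (hcont : ∀ p ∈ Γ, Continuous p)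
    (htop : t = ⨅ p : Γ,
      (p : Seminorm ℝ E).toSeminormedAddCommGroup.toUniformSpace.toTopologicalSpace)
    (D D' : Submodule ℝ E) (A : D →ₗ[ℝ] E) (A' : D' →ₗ[ℝ] E)
    (hdense : Dense (D : Set E))
    (hdiss : ∀ l : ℝ, 0 < l → ∀ x : D, ∀ p ∈ Γ, l * p (x : E) ≤ p (l • (x : E) - A x))
    (hext : ∃ h : D ≤ D', ∀ x : D, A' ⟨(x : E), h x.2⟩ = A x)
    (hclosed : IsClosed {z : E × E | ∃ x : D', z = ((x : E), A' x)})
    (hmin : ∀ (D'' : Submodule ℝ E) (A'' : D'' →ₗ[ℝ] E),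
      (∃ h : D ≤ D'', ∀ x : D, A'' ⟨(x : E), h x.2⟩ = A x) →
      IsClosed {z : E × E | ∃ x : D'', z = ((x : E), A'' x)} →
      ∃ h : D' ≤ D'', ∀ x : D', A'' ⟨(x : E), h x.2⟩ = A' x)
    (T : ℝ → E →ₗ[ℝ] E)
    (hT0 : T 0 = LinearMap.id)
    (hTadd : ∀ s u : ℝ, 0 ≤ s → 0 ≤ u → T (s + u) = (T s).comp (T u))
    (hTcont : ∀ x : E, ContinuousOn (fun s => T s x) (Set.Ici 0))
    (heq : ∀ p ∈ Γ, ∃ q ∈ Γ, ∃ C : ℝ, 0 ≤ C ∧ ∀ s : ℝ, 0 ≤ s → ∀ x : E, p (T s x) ≤ C * q x)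
    (hdom : ∀ x : E, x ∈ D' ↔
      ∃ y : E, Tendsto (fun s : ℝ => s⁻¹ • (T s x - x)) (𝓝[>] (0 : ℝ)) (𝓝 y))
    (hlim : ∀ x : D', Tendsto (fun s : ℝ => s⁻¹ • (T s (x : E) - (x : E))) (𝓝[>] (0 : ℝ))
      (𝓝 (A' x))) :
    ∀ p ∈ Γ, ∀ s : ℝ, 0 ≤ s → ∀ x : E, p (T s x) ≤ p x := by
  obtain ⟨hle, hagree⟩ := hext
  -- continuity of the semigroup operators
  intro p hp
  haveI hne : Nonempty ↥Γ := ⟨⟨p, hp⟩⟩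
  have hTscont : ∀ s : ℝ, 0 ≤ s → Continuous (T s) := by
    set fam : SeminormFamily ℝ E ↥Γ := fun p => (p : Seminorm ℝ E) with hfam
    have hws : WithSeminorms fam :=
      (SeminormFamily.withSeminorms_iff_topologicalSpace_eq_iInf fam).2 htop
    intro s hs
    refine Seminorm.continuous_from_bounded hws hws (T s) ?_
    intro i
    obtain ⟨q, hq, C, hC0, hC⟩ := heq i.1 i.2
    refine ⟨{⟨q, hq⟩}, ⟨C, hC0⟩, fun x => ?_⟩
    simp only [Seminorm.comp_apply, Finset.sup_singleton, Seminorm.smul_apply, hfam,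
      NNReal.smul_def, smul_eq_mul]
    exact hC s hs x
  -- the closure of the graph of A is contained in the graph of A', and contains it
  have hdiss' : ∀ l : ℝ, 0 < l → ∀ x : D', ∀ p ∈ Γ, l * p (x : E) ≤ p (l • (x : E) - A' x) := by
    set S : Submodule ℝ (E × E) := LinearMap.range ((D.subtype).prod A) with hS
    set G := S.topologicalClosure with hG
    have hSsub : (S : Set (E × E)) ⊆ {z : E × E | ∃ x : D', z = ((x : E), A' x)} := by
      rintro z hz
      obtain ⟨d, rfl⟩ := hz
      exact ⟨⟨(d : E), hle d.2⟩, by simp [hagree d]⟩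
    have hGsub : (G : Set (E × E)) ⊆ {z : E × E | ∃ x : D', z = ((x : E), A' x)} := by
      rw [hG, Submodule.topologicalClosure_coe]
      exact closure_minimal hSsub hclosed
    set D₀ : Submodule ℝ E := G.map (LinearMap.fst ℝ E E) with hD₀
    have hD₀le : D₀ ≤ D' := by
      rintro x ⟨z, hz, rfl⟩
      obtain ⟨x', hx'⟩ := hGsub hz
      rw [hx']
      exact x'.2
    set A₀ : D₀ →ₗ[ℝ] E := A'.comp (Submodule.inclusion hD₀le) with hA₀
    have hgraphA₀ : {z : E × E | ∃ x : D₀, z = ((x : E), A₀ x)} = (G : Set (E × E)) := by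
      ext z
      constructor
      · rintro ⟨x, rfl⟩
        obtain ⟨z', hz', hfst⟩ := x.2
        obtain ⟨x', hx'⟩ := hGsub hz'
        have hxx : (x' : E) = (x : E) := by rw [hx'] at hfst; exact hfst
        have : A₀ x = A' x' := by
          rw [hA₀]
          exact congrArg A' (Subtype.ext hxx.symm)
        rw [this, ← hxx]
        rwa [hx'] at hz'
      · intro hz
        obtain ⟨x', hx'⟩ := hGsub hz
        have hmem : (x' : E) ∈ D₀ := ⟨z, hz, by rw [hx']; rfl⟩
        refine ⟨⟨(x' : E), hmem⟩, ?_⟩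
        rw [hx']
        have : A₀ ⟨(x' : E), hmem⟩ = A' x' := congrArg A' (Subtype.ext rfl)
        rw [this]
    have hA₀closed : IsClosed {z : E × E | ∃ x : D₀, z = ((x : E), A₀ x)} := by
      rw [hgraphA₀]; exact Submodule.isClosed_topologicalClosure S
    have hA₀ext : ∃ h : D ≤ D₀, ∀ x : D, A₀ ⟨(x : E), h x.2⟩ = A x := by
      have hDle : D ≤ D₀ := by
        intro x hx
        exact ⟨((x : E), A ⟨x, hx⟩), S.le_topologicalClosure ⟨⟨x, hx⟩, rfl⟩, rfl⟩
      refine ⟨hDle, fun x => ?_⟩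
      have : A₀ ⟨(x : E), hDle x.2⟩ = A' ⟨(x : E), hle x.2⟩ := congrArg A' (Subtype.ext rfl)
      rw [this, hagree]
    obtain ⟨hle', hval'⟩ := hmin D₀ A₀ hA₀ext hA₀closed
    have hgr : ∀ x : D', ((x : E), A' x) ∈ (G : Set (E × E)) := by
      intro x
      rw [← hgraphA₀]
      exact ⟨⟨(x : E), hle' x.2⟩, by rw [hval' x]⟩
    intro l hl x p hp
    have hCclosed : IsClosed {z : E × E | l * p z.1 ≤ p (l • z.1 - z.2)} := by
      apply isClosed_le
      · exact continuous_const.mul ((hcont p hp).comp continuous_fst)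
      · exact (hcont p hp).comp ((continuous_fst.const_smul l).sub continuous_snd)
    have hSC : (S : Set (E × E)) ⊆ {z : E × E | l * p z.1 ≤ p (l • z.1 - z.2)} := by
      rintro z ⟨d, rfl⟩
      exact hdiss l hl d p hp
    have hGC : (G : Set (E × E)) ⊆ {z : E × E | l * p z.1 ≤ p (l • z.1 - z.2)} := by
      rw [hG, Submodule.topologicalClosure_coe]
      exact closure_minimal hSC hCclosed
    exact hGC (hgr x)
  -- orbit stays in the domain and A' commutes with T s
  have horbit : ∀ (x : D') (s : ℝ), 0 ≤ s →
      ∃ hx : (T s (x : E)) ∈ D', A' ⟨T s (x : E), hx⟩ = T s (A' x) := by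
    intro x s hs
    have hTend : Tendsto (fun h : ℝ => h⁻¹ • (T h (T s (x : E)) - T s (x : E))) (𝓝[>] (0 : ℝ))
        (𝓝 (T s (A' x))) := by
      have h1 : Tendsto (fun h : ℝ => T s (h⁻¹ • (T h (x : E) - (x : E)))) (𝓝[>] (0 : ℝ))
          (𝓝 (T s (A' x))) := ((hTscont s hs).tendsto _).comp (hlim x)
      refine h1.congr' ?_
      filter_upwards [self_mem_nhdsWithin] with h hh
      have hcomm : T h (T s (x : E)) = T s (T h (x : E)) := by
        have e1 := hTadd h s (le_of_lt hh) hs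
        have e2 := hTadd s h hs (le_of_lt hh)
        calc T h (T s (x : E)) = T (h + s) (x : E) := by rw [e1]; rfl
          _ = T (s + h) (x : E) := by rw [add_comm]
          _ = T s (T h (x : E)) := by rw [e2]; rfl
      rw [map_smul, map_sub, hcomm]
    have hx : (T s (x : E)) ∈ D' := (hdom _).2 ⟨_, hTend⟩
    exact ⟨hx, tendsto_nhds_unique (hlim ⟨T s (x : E), hx⟩) hTend⟩
  -- the main estimate on D'
  have hD'bound : ∀ s : ℝ, 0 ≤ s → ∀ x : D', p (T s (x : E)) ≤ p (x : E) := by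
    intro s hs x
    rcases eq_or_lt_of_le hs with h0 | hspos
    · rw [← h0, hT0]; rfl
    obtain ⟨q, hq, C, hC0, hC⟩ := heq p hp
    set a := A' x with ha
    set z : ℝ → E := fun h => T h (x : E) - (x : E) - h • T h a with hz
    have key : ∀ u : ℝ, 0 ≤ u → ∀ h : ℝ, 0 < h →
        p (T (u + h) (x : E)) ≤ p (T u (x : E)) + C * q (z h) := by
      intro u hu h hh
      have huh : (0 : ℝ) ≤ u + h := by positivity
      obtain ⟨hy, hAy⟩ := horbit x (u + h) huh
      have d1 : (1 / h) * p (T (u + h) (x : E)) ≤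
          p ((1 / h) • (T (u + h) (x : E)) - T (u + h) a) := by
        have := hdiss' (1 / h) (by positivity) ⟨T (u + h) (x : E), hy⟩ p hp
        rwa [hAy] at this
      have d2 : p (T (u + h) (x : E)) ≤ p (T (u + h) (x : E) - h • T (u + h) a) := by
        have e : T (u + h) (x : E) - h • T (u + h) a =
            h • ((1 / h) • (T (u + h) (x : E)) - T (u + h) a) := by
          rw [smul_sub, smul_smul]
          field_simp
          rw [one_smul]
        rw [e, map_smul_eq_mul, Real.norm_eq_abs, abs_of_pos hh]
        calc p (T (u + h) (x : E)) = h * ((1 / h) * p (T (u + h) (x : E))) := by field_simp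
          _ ≤ h * p ((1 / h) • (T (u + h) (x : E)) - T (u + h) a) :=
            mul_le_mul_of_nonneg_left d1 hh.le
      have d3 : T (u + h) (x : E) - h • T (u + h) a = T u (x : E) + T u (z h) := by
        have c1 : T (u + h) (x : E) = T u (T h (x : E)) := by rw [hTadd u h hu hh.le]; rfl
        have c2 : T (u + h) a = T u (T h a) := by rw [hTadd u h hu hh.le]; rfl
        rw [c1, c2, hz]
        simp only [map_sub, map_smul]
        abel
      calc p (T (u + h) (x : E)) ≤ p (T (u + h) (x : E) - h • T (u + h) a) := d2
        _ = p (T u (x : E) + T u (z h)) := by rw [d3]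
        _ ≤ p (T u (x : E)) + p (T u (z h)) := map_add_le_add p _ _
        _ ≤ p (T u (x : E)) + C * q (z h) := add_le_add_right (hC u hu _) _
    have ind : ∀ n : ℕ, ∀ h : ℝ, 0 < h →
        p (T ((n : ℝ) * h) (x : E)) ≤ p (x : E) + (n : ℝ) * (C * q (z h)) := by
      intro n
      induction n with
      | zero => intro h hh; simp [hT0]
      | succ n ih =>
        intro h hh
        have e : ((n : ℝ) + 1) * h = (n : ℝ) * h + h := by ring
        have hnh : (0 : ℝ) ≤ (n : ℝ) * h := by positivity
        calc p (T ((↑(n + 1) : ℝ) * h) (x : E)) = p (T ((n : ℝ) * h + h) (x : E)) := by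
              push_cast; rw [e]
          _ ≤ p (T ((n : ℝ) * h) (x : E)) + C * q (z h) := key _ hnh h hh
          _ ≤ p (x : E) + (n : ℝ) * (C * q (z h)) + C * q (z h) := by
              exact add_le_add_left (ih h hh) _
          _ = p (x : E) + (↑(n + 1) : ℝ) * (C * q (z h)) := by push_cast; ring
    have hfin : ∀ n : ℕ, 1 ≤ n →
        p (T s (x : E)) ≤ p (x : E) + (n : ℝ) * (C * q (z (s / n))) := by
      intro n hn
      have hn0 : (0 : ℝ) < (n : ℝ) := by exact_mod_cast hn
      have hh : 0 < s / n := div_pos hspos hn0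
      have e : (n : ℝ) * (s / n) = s := by field_simp
      have := ind n (s / n) hh
      rwa [e] at this
    -- the error term tends to zero
    have hψ : Tendsto (fun h : ℝ => q (h⁻¹ • (T h (x : E) - (x : E)) - a) + q (T h a - a))
        (𝓝[>] (0 : ℝ)) (𝓝 0) := by
      have l1 : Tendsto (fun h : ℝ => q (h⁻¹ • (T h (x : E) - (x : E)) - a)) (𝓝[>] (0 : ℝ))
          (𝓝 0) := by
        have hc : Continuous (fun w : E => q (w - a)) :=
          (hcont q hq).comp (continuous_id.sub continuous_const)
        have := (hc.tendsto a).comp (hlim x)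
        simpa [Function.comp_def] using this
      have l2 : Tendsto (fun h : ℝ => q (T h a - a)) (𝓝[>] (0 : ℝ)) (𝓝 0) := by
        have hbase : Tendsto (fun h : ℝ => T h a) (𝓝[>] (0 : ℝ)) (𝓝 a) := by
          have h1 := (hTcont a 0 (self_mem_Ici)).mono_left
            (nhdsWithin_mono (0 : ℝ) (Ioi_subset_Ici le_rfl))
          have h0 : (fun s : ℝ => T s a) 0 = a := by show T 0 a = a; rw [hT0]; rfl
          rw [h0] at h1
          exact h1
        have hc : Continuous (fun w : E => q (w - a)) :=
          (hcont q hq).comp (continuous_id.sub continuous_const)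
        have := (hc.tendsto a).comp hbase
        simpa [Function.comp_def] using this
      simpa using l1.add l2
    have hsn : Tendsto (fun n : ℕ => s / (n : ℝ)) atTop (𝓝[>] (0 : ℝ)) := by
      rw [tendsto_nhdsWithin_iff]
      refine ⟨tendsto_const_div_atTop_nhds_zero_nat s, ?_⟩
      filter_upwards [eventually_ge_atTop 1] with n hn
      exact div_pos hspos (by exact_mod_cast hn)
    have hmain : Tendsto (fun n : ℕ => p (x : E) + (C * s) *
        (q ((s / n)⁻¹ • (T (s / n) (x : E) - (x : E)) - a) + q (T (s / n) a - a))) atTop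
        (𝓝 (p (x : E))) := by
      have := (hψ.comp hsn).const_mul (C * s)
      have h2 := tendsto_const_nhds (x := p (x : E)) (f := atTop (α := ℕ)) |>.add this
      simpa using h2
    refine ge_of_tendsto hmain ?_
    filter_upwards [eventually_ge_atTop 1] with n hn
    have hn0 : (0 : ℝ) < (n : ℝ) := by exact_mod_cast hn
    have hh : 0 < s / n := div_pos hspos hn0
    have zbound : q (z (s / n)) ≤ (s / n) *
        (q ((s / n)⁻¹ • (T (s / n) (x : E) - (x : E)) - a) + q (T (s / n) a - a)) := by
      set h : ℝ := s / n
      have e : z h = h • (h⁻¹ • (T h (x : E) - (x : E)) - a) - h • (T h a - a) := by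
        rw [hz]
        simp only [smul_sub, smul_smul, mul_inv_cancel₀ (ne_of_gt hh), one_smul]
        abel
      calc q (z h) = q (h • (h⁻¹ • (T h (x : E) - (x : E)) - a) - h • (T h a - a)) := by rw [e]
        _ ≤ q (h • (h⁻¹ • (T h (x : E) - (x : E)) - a)) + q (h • (T h a - a)) :=
          map_sub_le_add q _ _
        _ = h * (q (h⁻¹ • (T h (x : E) - (x : E)) - a) + q (T h a - a)) := by
          rw [map_smul_eq_mul, map_smul_eq_mul, Real.norm_eq_abs, abs_of_pos hh]; ring
    calc p (T s (x : E)) ≤ p (x : E) + (n : ℝ) * (C * q (z (s / n))) := hfin n hn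
      _ ≤ p (x : E) + (C * s) *
          (q ((s / n)⁻¹ • (T (s / n) (x : E) - (x : E)) - a) + q (T (s / n) a - a)) := by
        have : (n : ℝ) * (C * q (z (s / n))) ≤ (n : ℝ) * (C * ((s / n) *
            (q ((s / n)⁻¹ • (T (s / n) (x : E) - (x : E)) - a) + q (T (s / n) a - a)))) := by
          gcongr
        refine add_le_add_right (this.trans (le_of_eq ?_)) _
        field_simp
  -- extend by density
  intro s hs x
  have hKclosed : IsClosed {y : E | p (T s y) ≤ p y} :=
    isClosed_le ((hcont p hp).comp (hTscont s hs)) (hcont p hp)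
  have hDK : (D : Set E) ⊆ {y : E | p (T s y) ≤ p y} := fun y hy => hD'bound s hs ⟨y, hle hy⟩
  have : x ∈ closure {y : E | p (T s y) ≤ p y} := closure_mono hDK (hdense x)
  rwa [hKclosed.closure_eq] at this

end Abstract

end Auxiliary


namespace Statements

open LumerPhillips Filter Topology Set

variable {X : Type*}

theorem statement10 [NormedAddCommGroup X] [NormedSpace ℝ X] [CompleteSpace X]
    (τ γ : TopologicalSpace X) (Γτ Γγ : Set (Seminorm ℝ X))
    (hSaks : IsSaksSystem τ Γτ) (hmixed : IsMixedTopology τ γ) (hcomp : CompleteTop γ)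
    (hdir : DirectedSeminorms Γγ) (hgen : GeneratesTop Γγ γ) (hnorm : NormingSeminorms Γγ)
    (D : Submodule ℝ X) (A : D →ₗ[ℝ] X)
    (hdense : @Dense X γ (D : Set X))
    (hdiss : GammaDissipative Γγ D A)
    (hran : ∃ l : ℝ, 0 < l ∧ @Dense X γ (opRange D A l)) :
    ∀ (D' : Submodule ℝ X) (A' : D' →ₗ[ℝ] X) (T : ℝ → X →ₗ[ℝ] X),
      IsClosureOp γ D A D' A' → IsSemigroupOn γ T → EquicontOn Γγ T →
      IsGeneratorLC γ T D' A' → ContractionSG T := by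
  intro D' A' T hclos hsg heq hgenr
  obtain ⟨⟨⟨htag, hcsm⟩, hγτ, -, -⟩, -⟩ := hmixed
  have ht2 : @T2Space X γ :=
    @T2Space.of_injective_continuous X X γ τ hSaks.1 id Function.injective_id
      (continuous_id_of_le hγτ)
  have key : ∀ p ∈ Γγ, ∀ s : ℝ, 0 ≤ s → ∀ x : X, p (T s x) ≤ p x :=
    @abstract_contraction X _ _ γ htag hcsm ht2 Γγ hgen.1 hgen.2 D D' A A' hdense hdiss
      hclos.1 hclos.2.1 hclos.2.2 T hsg.1 hsg.2.1 hsg.2.2 heq hgenr.1 hgenr.2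
  intro s hs x
  rw [hnorm (T s x)]
  exact Real.iSup_le
    (fun p => (key p.1 p.2 s hs x).trans (normingBound hnorm p.2 x)) (norm_nonneg x)


end Statements
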